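/- Let s₁ = s₂ = s be a natural number, ℓ₁, ℓ₂ units mod s, ξ an integer, and Δ = ℓ₁ − ℓ₂. Then (1/s) Σ_{x mod s} K_s(ℓ₁ x) conj(K_s(ℓ₂ x)) e(ξx/s) = (1/s) Σ_{x units mod s} e( x(ξx+Δ)(ξx+ℓ₁)⁻¹ / s ), where the right-hand sum is over units x mod s for which ξx+ℓ₁ is a unit, and K_c(a) := c^{−1/2} Σ_{y units mod c} e((ay+y⁻¹)/c). -/

import Mathlib

noncomputable def eZ (N : ℕ) (x : ZMod N) : ℂ :=
  Complex.exp (2 * Real.pi * Complex.I * ((x.val : ℂ) / (N : ℂ)))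

/-- Normalized Kloosterman sum `K_c(a) = c^{-1/2} S(a,1;c)`. -/
noncomputable def Knorm (c : ℕ) [NeZero c] (a : ZMod c) : ℂ :=
  ((Real.sqrt c : ℂ))⁻¹ * ∑ y : (ZMod c)ˣ, eZ c (a * y + (y⁻¹ : (ZMod c)ˣ))

theorem stmt_12 (s : ℕ) [NeZero s] (ℓ₁ ℓ₂ ξ : ℤ)
    (hℓ₁ : IsCoprime ℓ₁ (s : ℤ)) (hℓ₂ : IsCoprime ℓ₂ (s : ℤ)) :
    ((s : ℂ))⁻¹ *
        ∑ x : ZMod s,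
          Knorm s ((ℓ₁ : ZMod s) * x) * (starRingEnd ℂ) (Knorm s ((ℓ₂ : ZMod s) * x)) *
            eZ s ((ξ : ZMod s) * x) =
      ((s : ℂ))⁻¹ *
        ∑ x ∈ Finset.univ.filter
            (fun x : (ZMod s)ˣ => IsUnit ((ξ : ZMod s) * x + (ℓ₁ : ZMod s))),
          eZ s ((x : ZMod s) *
            ((ξ : ZMod s) * x + ((ℓ₁ - ℓ₂ : ℤ) : ZMod s)) *
            ((ξ : ZMod s) * x + (ℓ₁ : ZMod s))⁻¹) := by
  classical
  have hs0 : (s : ℂ) ≠ 0 := Nat.cast_ne_zero.mpr (NeZero.ne s)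
  set ψ : AddChar (ZMod s) ℂ := ZMod.stdAddChar with hψdef
  have heZ : ∀ a : ZMod s, eZ s a = ψ a := by
    intro a
    rw [hψdef, ZMod.stdAddChar_apply, ZMod.toCircle_apply, eZ]
    congr 1
    ring
  have hψne : ∀ a : ZMod s, ψ a ≠ 0 := by
    intro a h
    have h1 : ψ (a + -a) = ψ a * ψ (-a) := AddChar.map_add_eq_mul ψ a (-a)
    simp [h] at h1
  have hconj : ∀ a : ZMod s, (starRingEnd ℂ) (ψ a) = ψ (-a) := by
    intro a
    have h1 : ψ a * ψ (-a) = 1 := by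
      rw [← AddChar.map_add_eq_mul]; simp
    have h2 : ψ a * (starRingEnd ℂ) (ψ a) = 1 := by
      rw [hψdef, ZMod.stdAddChar_apply, Complex.mul_conj]
      norm_cast
      simp [Complex.normSq_eq_norm_sq, Circle.norm_coe]
    exact (mul_left_cancel₀ (hψne a) (h2.trans h1.symm))
  -- units from coprimality
  have hu₂ : IsUnit ((ℓ₂ : ZMod s)) := by
    have h := hℓ₂.map (Int.castRingHom (ZMod s))
    simp only [Int.coe_castRingHom, Int.cast_natCast, ZMod.natCast_self,
      isCoprime_zero_right] at h
    simpa using h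
  set L₂ : (ZMod s)ˣ := hu₂.unit with hL₂def
  have hL₂ : (L₂ : ZMod s) = (ℓ₂ : ZMod s) := hu₂.unit_spec
  -- the pair set
  set A : Finset ((ZMod s)ˣ × (ZMod s)ˣ) :=
    Finset.univ.filter
      (fun p : (ZMod s)ˣ × (ZMod s)ˣ =>
        (ℓ₁ : ZMod s) * ↑p.1 - (ℓ₂ : ZMod s) * ↑p.2 + (ξ : ZMod s) = 0) with hA
  have hmemA : ∀ p : (ZMod s)ˣ × (ZMod s)ˣ, p ∈ A →
      (ξ : ZMod s) * ↑(p.1⁻¹) + (ℓ₁ : ZMod s) = ↑(p.1⁻¹ * L₂ * p.2) := by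
    intro p hp
    rw [hA, Finset.mem_filter] at hp
    have hc := hp.2
    have h1 : (↑p.1 : ZMod s) * ↑(p.1⁻¹) = 1 := p.1.mul_inv
    simp only [Units.val_mul, hL₂]
    linear_combination (-((ℓ₁ : ZMod s))) * h1 + (↑(p.1⁻¹) : ZMod s) * hc
  -- Step 1: open the Kloosterman sums
  have hre : ∀ x : ZMod s,
      Knorm s ((ℓ₁ : ZMod s) * x) * (starRingEnd ℂ) (Knorm s ((ℓ₂ : ZMod s) * x)) *
        eZ s ((ξ : ZMod s) * x)
      = ((Real.sqrt s : ℂ))⁻¹ * ((Real.sqrt s : ℂ))⁻¹ *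
        ∑ p : (ZMod s)ˣ × (ZMod s)ˣ,
          ψ (x * ((ℓ₁ : ZMod s) * ↑p.1 - (ℓ₂ : ZMod s) * ↑p.2 + (ξ : ZMod s))) *
            ψ ((↑(p.1⁻¹) : ZMod s) - ↑(p.2⁻¹)) := by
    intro x
    rw [Knorm, Knorm, map_mul, map_sum, map_inv₀, Complex.conj_ofReal]
    simp only [heZ, hconj]
    rw [show ∀ a b c d : ℂ, (a * b) * (a * c) * d = a * a * (b * c * d) from
      fun a b c d => by ring]
    congr 1
    rw [Finset.sum_mul_sum, Finset.sum_mul, Fintype.sum_prod_type]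
    refine Finset.sum_congr rfl fun y _ => ?_
    rw [Finset.sum_mul]
    refine Finset.sum_congr rfl fun z _ => ?_
    rw [← AddChar.map_add_eq_mul, ← AddChar.map_add_eq_mul, ← AddChar.map_add_eq_mul]
    congr 1
    ring
  have hcc : ((Real.sqrt s : ℂ))⁻¹ * ((Real.sqrt s : ℂ))⁻¹ = (s : ℂ)⁻¹ := by
    rw [← mul_inv, ← Complex.ofReal_mul, Real.mul_self_sqrt (by positivity)]
    norm_num
  have hprim := ZMod.isPrimitive_stdAddChar s
  have key1 : (∑ x : ZMod s,
      Knorm s ((ℓ₁ : ZMod s) * x) * (starRingEnd ℂ) (Knorm s ((ℓ₂ : ZMod s) * x)) *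
        eZ s ((ξ : ZMod s) * x))
      = ∑ p ∈ A, ψ ((↑(p.1⁻¹) : ZMod s) - ↑(p.2⁻¹)) := by
    simp_rw [hre]
    rw [← Finset.mul_sum, Finset.sum_comm]
    simp_rw [← Finset.sum_mul]
    rw [hcc]
    have hshift : ∀ p : (ZMod s)ˣ × (ZMod s)ˣ,
        (∑ x : ZMod s, ψ (x * ((ℓ₁ : ZMod s) * ↑p.1 - (ℓ₂ : ZMod s) * ↑p.2 + (ξ : ZMod s))))
        = if (ℓ₁ : ZMod s) * ↑p.1 - (ℓ₂ : ZMod s) * ↑p.2 + (ξ : ZMod s) = 0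
            then (s : ℂ) else 0 := by
      intro p
      rw [AddChar.sum_mulShift _ hprim]
      simp [ZMod.card]
    simp_rw [hshift, ite_mul, zero_mul]
    rw [← Finset.sum_filter, ← hA, ← Finset.mul_sum, inv_mul_cancel_left₀ hs0]
  -- Step 2: the bijection (y, z) ↦ y⁻¹
  have key2 : (∑ p ∈ A, ψ ((↑(p.1⁻¹) : ZMod s) - ↑(p.2⁻¹)))
      = ∑ x ∈ Finset.univ.filter
            (fun x : (ZMod s)ˣ => IsUnit ((ξ : ZMod s) * x + (ℓ₁ : ZMod s))),
          eZ s ((x : ZMod s) *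
            ((ξ : ZMod s) * x + ((ℓ₁ - ℓ₂ : ℤ) : ZMod s)) *
            ((ξ : ZMod s) * x + (ℓ₁ : ZMod s))⁻¹) := by
    refine Finset.sum_bij (fun p _ => p.1⁻¹) ?_ ?_ ?_ ?_
    · intro p hp
      exact Finset.mem_filter.mpr ⟨Finset.mem_univ _,
        ⟨p.1⁻¹ * L₂ * p.2, (hmemA p hp).symm⟩⟩
    · intro p hp q hq h
      have h1 : p.1 = q.1 := by rwa [inv_inj] at h
      have h1c : (↑p.1 : ZMod s) = ↑q.1 := by rw [h1]
      rw [hA, Finset.mem_filter] at hp hq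
      have hcp := hp.2
      have hcq := hq.2
      have h2 : (↑L₂ : ZMod s) * ↑p.2 = ↑L₂ * ↑q.2 := by
        rw [hL₂]
        linear_combination hcq - hcp + (ℓ₁ : ZMod s) * h1c
      have h3 : (↑p.2 : ZMod s) = ↑q.2 := by
        have h4 : (↑(L₂⁻¹) : ZMod s) * ((↑L₂ : ZMod s) * ↑p.2)
            = ↑(L₂⁻¹) * ((↑L₂ : ZMod s) * ↑q.2) := by rw [h2]
        rwa [← mul_assoc, ← mul_assoc, Units.inv_mul, one_mul, one_mul] at h4
      exact Prod.ext h1 (Units.ext h3)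
    · intro x hx
      rw [Finset.mem_filter] at hx
      obtain ⟨u, hu⟩ := hx.2
      have hxx : (↑x : ZMod s) * ↑(x⁻¹) = 1 := x.mul_inv
      have hLL : (ℓ₂ : ZMod s) * ↑(L₂⁻¹) = 1 := by rw [← hL₂]; exact L₂.mul_inv
      refine ⟨(x⁻¹, L₂⁻¹ * x⁻¹ * u), ?_, inv_inv x⟩
      rw [hA, Finset.mem_filter]
      refine ⟨Finset.mem_univ _, ?_⟩
      simp only [Units.val_mul]
      linear_combination (-((↑(x⁻¹) : ZMod s) * ↑u)) * hLL + (-(↑(x⁻¹) : ZMod s)) * hu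
        + (-((ξ : ZMod s))) * hxx
    · intro p hp
      rw [heZ]
      congr 1
      have hk := hmemA p hp
      have hΔ : ((ℓ₁ - ℓ₂ : ℤ) : ZMod s) = (ℓ₁ : ZMod s) - (ℓ₂ : ZMod s) := by push_cast; ring
      have h5 : (ξ : ZMod s) * ↑(p.1⁻¹) + ((ℓ₁ : ZMod s) - (ℓ₂ : ZMod s))
          = ↑(p.1⁻¹ * L₂ * p.2) - (ℓ₂ : ZMod s) := by rw [← hk]; ring
      rw [hΔ, h5, hk, ZMod.inv_coe_unit]
      have hAA : (↑p.1 : ZMod s) * ↑(p.1⁻¹) = 1 := p.1.mul_inv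
      have hBB : (↑p.2 : ZMod s) * ↑(p.2⁻¹) = 1 := p.2.mul_inv
      have hCC : (↑L₂ : ZMod s) * ↑(L₂⁻¹) = 1 := L₂.mul_inv
      simp only [mul_inv_rev, inv_inv, Units.val_mul, ← hL₂]
      rw [show (↑(p.1⁻¹) : ZMod s) * ((↑(p.1⁻¹) : ZMod s) * ↑L₂ * ↑p.2 - ↑L₂) *
            ((↑(p.2⁻¹) : ZMod s) * ((↑(L₂⁻¹) : ZMod s) * ↑p.1))
          = ((↑p.1 : ZMod s) * ↑(p.1⁻¹)) * ((↑p.2 : ZMod s) * ↑(p.2⁻¹)) *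
              ((↑L₂ : ZMod s) * ↑(L₂⁻¹)) * ↑(p.1⁻¹)
            - ((↑p.1 : ZMod s) * ↑(p.1⁻¹)) * ((↑L₂ : ZMod s) * ↑(L₂⁻¹)) * ↑(p.2⁻¹)
          from by ring, hAA, hBB, hCC]
      ring
  rw [key1, key2]
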